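/- Let (l_j)_{j≥1} be a nonincreasing sequence of positive real numbers with ∑_{j=1}^∞ l_j < ∞, and let N(x) = #{ j ≥ 1 : l_j ≥ 1/x } for x > 0. Define the abscissa of convergence σ = inf{ α ∈ ℝ : ∑_{j=1}^∞ l_j^α < ∞ } and the growth rate D = inf{ α ≥ 0 : N(x) = O(x^α) as x → ∞ }. Then σ = D. -/

import Mathlib

open Filter

private lemma finite_aux (l : ℕ → ℝ) (hsum : Summable l) {x : ℝ} (hx : 0 < x) :
    {j : ℕ | 1 / x ≤ l j}.Finite := by
  have h1 : ∀ᶠ j in atTop, l j < 1 / x :=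
    hsum.tendsto_atTop_zero.eventually (gt_mem_nhds (by positivity))
  rw [← Nat.cofinite_eq_atTop, Filter.eventually_cofinite] at h1
  convert h1 using 1
  ext j; simp [not_lt]

private lemma lower_aux (l : ℕ → ℝ) (hmono : Antitone l) (hsum : Summable l)
    (N : ℝ → ℝ) (hN : ∀ x : ℝ, 0 < x → N x = Nat.card {j : ℕ | 1 / x ≤ l j})
    {x : ℝ} (hx : 0 < x) {j : ℕ} (hj : 1 / x ≤ l j) : (j : ℝ) + 1 ≤ N x := by
  rw [hN x hx]
  have hsub : Set.Iic j ⊆ {i : ℕ | 1 / x ≤ l i} := fun i hi => le_trans hj (hmono hi)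
  have hc := Nat.card_mono (finite_aux l hsum hx) hsub
  rw [Nat.card_coe_set_eq, Set.ncard_eq_toFinset_card', Set.toFinset_Iic,
    Nat.card_Iic] at hc
  exact_mod_cast Nat.cast_le.mpr hc

private lemma upper_aux (l : ℕ → ℝ) (hpos : ∀ j, 0 < l j) (hmono : Antitone l)
    (N : ℝ → ℝ) (hN : ∀ x : ℝ, 0 < x → N x = Nat.card {j : ℕ | 1 / x ≤ l j})
    {α : ℝ} (hα : 0 < α) (hS : Summable fun j => l j ^ α) {x : ℝ} (hx : 0 < x) :
    N x ≤ (∑' j, l j ^ α) * x ^ α := by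
  set A := ∑' j, l j ^ α with hA
  have hxα : 0 < x ^ α := Real.rpow_pos_of_pos hx α
  have hApos : 0 ≤ A := tsum_nonneg fun j => Real.rpow_nonneg (hpos j).le α
  have hkey : ∀ j : ℕ, 1 / x ≤ l j → (j : ℝ) + 1 ≤ A * x ^ α := by
    intro j hj
    have h2 : (Finset.range (j + 1)).card • ((1 / x) ^ α)
        ≤ ∑ i ∈ Finset.range (j + 1), l i ^ α := by
      apply Finset.card_nsmul_le_sum
      intro i hi
      exact Real.rpow_le_rpow (by positivity)
        (le_trans hj (hmono (Nat.lt_succ_iff.mp (Finset.mem_range.mp hi)))) hα.le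
    have h3 := Summable.sum_le_tsum (Finset.range (j + 1)) (fun i _ => Real.rpow_nonneg (hpos i).le α) hS
    rw [Finset.card_range, nsmul_eq_mul] at h2
    have h1 : ((j : ℝ) + 1) * (1 / x) ^ α ≤ A := by
      calc ((j : ℝ) + 1) * (1 / x) ^ α = ((j + 1 : ℕ) : ℝ) * (1 / x) ^ α := by push_cast; ring
        _ ≤ A := le_trans h2 h3
    rw [one_div, Real.inv_rpow hx.le] at h1
    calc (j : ℝ) + 1 = ((j : ℝ) + 1) * (x ^ α)⁻¹ * x ^ α := by field_simp
      _ ≤ A * x ^ α := mul_le_mul_of_nonneg_right h1 hxα.le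
  rw [hN x hx]
  have hsub : {j : ℕ | 1 / x ≤ l j} ⊆ Set.Iio ⌊A * x ^ α⌋₊ := by
    intro j hj
    have h4 : ((j + 1 : ℕ) : ℝ) ≤ A * x ^ α := by push_cast; exact hkey j hj
    exact Nat.lt_of_succ_le (Nat.le_floor h4)
  have hc := Nat.card_mono (Set.finite_Iio _) hsub
  have hIio : Nat.card (Set.Iio ⌊A * x ^ α⌋₊ : Set ℕ) = ⌊A * x ^ α⌋₊ := by
    rw [Nat.card_coe_set_eq, Set.ncard_eq_toFinset_card', Set.toFinset_Iio, Nat.card_Iio]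
  rw [hIio] at hc
  exact le_trans (by exact_mod_cast hc) (Nat.floor_le (mul_nonneg hApos hxα.le))

private lemma decay_aux (l : ℕ → ℝ) (hpos : ∀ j, 0 < l j) (hmono : Antitone l)
    (hsum : Summable l)
    (N : ℝ → ℝ) (hN : ∀ x : ℝ, 0 < x → N x = Nat.card {j : ℕ | 1 / x ≤ l j})
    {α C x₀ : ℝ} (hC : 0 < C) (hx₀ : 0 < x₀)
    (hb : ∀ x, x₀ < x → N x ≤ C * x ^ α) {j : ℕ} (hj : l j < 1 / x₀) :
    l j ^ α ≤ C / ((j : ℝ) + 1) := by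
  have hl := hpos j
  have hx : x₀ < 1 / l j := by
    rw [lt_div_iff₀ hl]
    have := (lt_div_iff₀ hx₀).mp hj
    linarith
  have hxpos : 0 < 1 / l j := by positivity
  have h1 : (j : ℝ) + 1 ≤ N (1 / l j) :=
    lower_aux l hmono hsum N hN hxpos (by rw [one_div_one_div])
  have h2 := hb _ hx
  rw [one_div] at h1 h2
  rw [Real.inv_rpow hl.le] at h2
  have hlα : 0 < l j ^ α := Real.rpow_pos_of_pos hl α
  have h4 : ((j : ℝ) + 1) * l j ^ α ≤ C := by
    have h3 := le_trans h1 h2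
    calc ((j : ℝ) + 1) * l j ^ α ≤ C * (l j ^ α)⁻¹ * l j ^ α :=
          mul_le_mul_of_nonneg_right h3 hlα.le
      _ = C := by field_simp
  rw [le_div_iff₀ (by positivity : (0:ℝ) < (j:ℝ) + 1)]
  linarith [h4]

theorem abscissa_eq_growth_rate (l : ℕ → ℝ) (hpos : ∀ j, 0 < l j)
    (hmono : Antitone l) (hsum : Summable l)
    (N : ℝ → ℝ) (hN : ∀ x : ℝ, 0 < x → N x = Nat.card {j : ℕ | 1 / x ≤ l j}) :
    sInf {α : ℝ | Summable fun j => l j ^ α}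
      = sInf {α : ℝ | 0 ≤ α ∧
          ∃ C > (0 : ℝ), ∃ x₀ > (0 : ℝ), ∀ x : ℝ, x₀ < x → N x ≤ C * x ^ α} := by
  set S := {α : ℝ | Summable fun j => l j ^ α} with hSdef
  set T := {α : ℝ | 0 ≤ α ∧
      ∃ C > (0 : ℝ), ∃ x₀ > (0 : ℝ), ∀ x : ℝ, x₀ < x → N x ≤ C * x ^ α} with hTdef
  have hSpos : ∀ α ∈ S, 0 < α := by
    intro α hα
    rw [hSdef, Set.mem_setOf_eq] at hα
    by_contra h
    push_neg at h
    have h1 : ∀ᶠ j in atTop, l j < 1 :=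
      hsum.tendsto_atTop_zero.eventually (gt_mem_nhds one_pos)
    have h3 : ∀ᶠ j in atTop, l j ^ α < 1 :=
      hα.tendsto_atTop_zero.eventually (gt_mem_nhds one_pos)
    obtain ⟨j, hj1, hj3⟩ := (h1.and h3).exists
    exact absurd (Real.one_le_rpow_of_pos_of_le_one_of_nonpos (hpos j) hj1.le h)
      (not_le.mpr hj3)
  have hS1 : (1 : ℝ) ∈ S := by
    rw [hSdef, Set.mem_setOf_eq]
    simpa [Real.rpow_one] using hsum
  have hST : ∀ α ∈ S, α ∈ T := by
    intro α hα
    have hαpos := hSpos α hα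
    rw [hSdef, Set.mem_setOf_eq] at hα
    have hApos : 0 ≤ ∑' j, l j ^ α := tsum_nonneg fun j => Real.rpow_nonneg (hpos j).le α
    refine ⟨hαpos.le, (∑' j, l j ^ α) + 1, by linarith, 1, one_pos, fun x hx => ?_⟩
    have hx0 : (0:ℝ) < x := lt_trans one_pos hx
    have hxα : 0 < x ^ α := Real.rpow_pos_of_pos hx0 α
    calc N x ≤ (∑' j, l j ^ α) * x ^ α := upper_aux l hpos hmono N hN hαpos hα hx0
      _ ≤ ((∑' j, l j ^ α) + 1) * x ^ α := by nlinarith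
  have hTbdd : BddBelow T := ⟨0, fun α hα => hα.1⟩
  have hSbdd : BddBelow S := ⟨0, fun α hα => (hSpos α hα).le⟩
  apply le_antisymm
  · -- σ ≤ D
    apply le_csInf ⟨1, hST 1 hS1⟩
    intro α hα
    obtain ⟨hα0, C, hC, x₀, hx₀, hb⟩ := hα
    have hαpos : 0 < α := by
      rcases hα0.lt_or_eq with h | h
      · exact h
      · exfalso
        set j := ⌈C⌉₊ with hj
        set x := max x₀ (1 / l j) + 1 with hxdef
        have hlj := hpos j
        have hx1 : x₀ < x := by
          have := le_max_left x₀ (1 / l j); simp only [hxdef]; linarith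
        have hx2 : 1 / l j < x := by
          have := le_max_right x₀ (1 / l j); simp only [hxdef]; linarith
        have hxpos : 0 < x := lt_trans hx₀ hx1
        have hjx : 1 / x ≤ l j := by
          rw [div_le_iff₀ hxpos]
          have h5 := (div_lt_iff₀ hlj).mp hx2
          linarith
        have h6 := lower_aux l hmono hsum N hN hxpos hjx
        have h7 := hb x hx1
        rw [← h, Real.rpow_zero, mul_one] at h7
        have h8 : C ≤ (j : ℝ) := by exact_mod_cast Nat.le_ceil C
        linarith
    apply le_of_forall_gt_imp_ge_of_dense
    intro β hβ
    apply csInf_le hSbdd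
    rw [hSdef, Set.mem_setOf_eq]
    have h1 : ∀ᶠ j in atTop, l j < 1 / x₀ :=
      hsum.tendsto_atTop_zero.eventually (gt_mem_nhds (by positivity))
    obtain ⟨J, hJ⟩ := eventually_atTop.mp h1
    rw [← summable_nat_add_iff J]
    set q := β / α with hq
    have hq1 : 1 < q := (one_lt_div hαpos).mpr hβ
    have hqpos : 0 < q := lt_trans one_pos hq1
    have hcomp : Summable fun n : ℕ => C ^ q * ((n : ℝ) + 1) ^ (-q) := by
      have h2 := (Real.summable_nat_rpow.mpr (by linarith : -q < -1)).comp_injective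
        Nat.succ_injective
      apply (h2.mul_left (C ^ q)).congr
      intro n
      simp only [Function.comp_apply]
      push_cast
      ring_nf
    apply Summable.of_nonneg_of_le (fun n => Real.rpow_nonneg (hpos _).le β) _ hcomp
    intro n
    have hd := decay_aux l hpos hmono hsum N hN hC hx₀ hb (hJ (n + J) (Nat.le_add_left J n))
    have hd2 : l (n + J) ^ α ≤ C / ((n : ℝ) + 1) := by
      refine le_trans hd (div_le_div_of_nonneg_left hC.le (by positivity) ?_)
      push_cast
      linarith [show (0:ℝ) ≤ (J:ℝ) from Nat.cast_nonneg J]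
    have hlb : l (n + J) ^ β = (l (n + J) ^ α) ^ q := by
      rw [← Real.rpow_mul (hpos _).le]
      congr 1
      rw [hq]; field_simp [hαpos.ne']
    rw [hlb]
    calc (l (n + J) ^ α) ^ q ≤ (C / ((n : ℝ) + 1)) ^ q :=
        Real.rpow_le_rpow (Real.rpow_nonneg (hpos _).le α) hd2 hqpos.le
      _ = C ^ q * ((n : ℝ) + 1) ^ (-q) := by
        rw [Real.div_rpow hC.le (by positivity), Real.rpow_neg (by positivity),
          div_eq_mul_inv]
  · -- D ≤ σ
    apply le_csInf ⟨1, hS1⟩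
    intro α hα
    exact csInf_le hTbdd (hST α hα)
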